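/- Let n ≥ 1, let 𝒴 = {1, ..., K} with K ≥ 1, and let (X_i, Y_i), i = 1, ..., 2n+1, be random variables with values in 𝒳 × 𝒴 whose joint distribution is exchangeable. Fix a measurable score function s : 𝒳 × 𝒴 → ℝ. For y ∈ 𝒴 let I_y = {i ∈ {n+1,...,2n} : Y_i = y}, n_y = |I_y|, and define p(X_{2n+1}|y) = (Σ_{i ∈ I_y} 1{s(X_i, y) ≤ s(X_{2n+1}, y)} + 1)/(n_y + 1). Fix α ∈ (0,1) and define C(X_{2n+1}) = {y ∈ 𝒴 : p(X_{2n+1}|y) > α}. Fix y ∈ 𝒴 and a subset I ⊆ {n+1,...,2n} with |I| = m such that P(I_y = I, Y_{2n+1} = y) > 0, and suppose that on this event the scores {s(X_i, y) : i ∈ I} ∪ {s(X_{2n+1}, y)} are almost surely pairwise distinct. Then P(Y_{2n+1} ∈ C(X_{2n+1}) | I_y = I, Y_{2n+1} = y) ≤ 1 − α + 1/(m+1). -/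

import Mathlib

open MeasureTheory ProbabilityTheory
open scoped ENNReal

section AuxConformal

variable {ι : Type*} [DecidableEq ι]

private lemma aux_card_filter_perm (J : Finset ι) (σ : Equiv.Perm ι)
    (hσ : ∀ i, i ∈ J ↔ σ i ∈ J) (Q : ι → Prop) [DecidablePred Q] :
    (J.filter fun i => Q (σ i)).card = (J.filter Q).card := by
  refine Finset.card_bij' (fun i _ => σ i) (fun i _ => σ.symm i) ?_ ?_ ?_ ?_
  · intro a ha
    rw [Finset.mem_filter] at ha ⊢
    exact ⟨(hσ a).1 ha.1, ha.2⟩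
  · intro a ha
    rw [Finset.mem_filter] at ha ⊢
    have h2 := (hσ (σ.symm a)).2
    rw [Equiv.apply_symm_apply] at h2
    refine ⟨h2 ha.1, by simpa using ha.2⟩
  · intro a _; simp
  · intro a _; simp

variable {𝒳 : Type*} {K : ℕ}

/-- rank of index `j` among scores over `J` -/
private noncomputable def aux_rk (s : 𝒳 × Fin K → ℝ) (y : Fin K) (J : Finset ι)
    (j : ι) (z : ι → 𝒳 × Fin K) : ℕ :=
  (J.filter (fun i => s ((z i).1, y) ≤ s ((z j).1, y))).card

private lemma aux_rk_lt (s : 𝒳 × Fin K → ℝ) (y : Fin K) (J : Finset ι)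
    {j1 j2 : ι} (hj2 : j2 ∈ J) (z : ι → 𝒳 × Fin K)
    (h : s ((z j1).1, y) < s ((z j2).1, y)) :
    aux_rk s y J j1 z < aux_rk s y J j2 z := by
  classical
  apply Finset.card_lt_card
  have hsub : (J.filter (fun i => s ((z i).1, y) ≤ s ((z j1).1, y)))
      ⊆ (J.filter (fun i => s ((z i).1, y) ≤ s ((z j2).1, y))) := by
    intro i hi
    rw [Finset.mem_filter] at hi ⊢
    exact ⟨hi.1, hi.2.trans h.le⟩
  refine (Finset.ssubset_iff_of_subset hsub).2 ⟨j2, ?_, ?_⟩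
  · exact Finset.mem_filter.2 ⟨hj2, le_refl _⟩
  · intro hmem
    exact absurd (Finset.mem_filter.1 hmem).2 (not_le.2 h)

private lemma aux_rk_injOn (s : 𝒳 × Fin K → ℝ) (y : Fin K) (J : Finset ι)
    (z : ι → 𝒳 × Fin K)
    (hinj : Set.InjOn (fun i => s ((z i).1, y)) ↑J) :
    Set.InjOn (fun j => aux_rk s y J j z) ↑J := by
  intro j1 h1 j2 h2 heq
  by_contra hne
  have hs : s ((z j1).1, y) ≠ s ((z j2).1, y) := fun h => hne (hinj h1 h2 h)
  rcases lt_or_gt_of_ne hs with h | h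
  · exact absurd heq (Nat.ne_of_lt (aux_rk_lt s y J h2 z h))
  · exact absurd heq.symm (Nat.ne_of_lt (aux_rk_lt s y J h1 z h))

omit [DecidableEq ι] in
private lemma aux_rk_le (s : 𝒳 × Fin K → ℝ) (y : Fin K) (J : Finset ι)
    (j : ι) (z : ι → 𝒳 × Fin K) : aux_rk s y J j z ≤ J.card :=
  Finset.card_le_card (Finset.filter_subset _ _)

private lemma aux_count_le (s : 𝒳 × Fin K → ℝ) (y : Fin K) (J : Finset ι)
    (z : ι → 𝒳 × Fin K) (r0 : ℕ)
    (hinj : Set.InjOn (fun i => s ((z i).1, y)) ↑J) :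
    (J.filter fun j => r0 ≤ aux_rk s y J j z).card ≤ J.card + 1 - r0 := by
  classical
  have h := Finset.card_le_card_of_injOn (fun j => aux_rk s y J j z)
    (s := J.filter fun j => r0 ≤ aux_rk s y J j z)
    (t := Finset.Icc r0 J.card)
    (fun a ha => by
      rw [Finset.mem_coe, Finset.mem_filter] at ha
      exact Finset.mem_Icc.2 ⟨ha.2, aux_rk_le s y J a z⟩)
    ((aux_rk_injOn s y J z hinj).mono (by
      intro x hx
      simpa using (Finset.filter_subset _ _) hx))
  simpa [Nat.card_Icc] using h

private lemma aux_rk_perm (s : 𝒳 × Fin K → ℝ) (y : Fin K) (J : Finset ι)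
    (z : ι → 𝒳 × Fin K) (σ : Equiv.Perm ι) (hσ : ∀ i, i ∈ J ↔ σ i ∈ J) (j : ι) :
    aux_rk s y J j (fun i => z (σ i)) = aux_rk s y J (σ j) z := by
  classical
  exact aux_card_filter_perm J σ hσ (fun i => s ((z i).1, y) ≤ s ((z (σ j)).1, y))

/-- invariance of the conditioning event under the swap of `j ∈ I` with `lst` -/
private lemma aux_cond_swap (y : Fin K) (Dcal I : Finset ι) (hI : I ⊆ Dcal)
    {lst : ι} (hlstD : lst ∉ Dcal) {j : ι} (hj : j ∈ I)
    (z : ι → 𝒳 × Fin K) :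
    ((Dcal.filter (fun i => (z (Equiv.swap j lst i)).2 = y) = I ∧
        (z (Equiv.swap j lst lst)).2 = y)
      ↔ (Dcal.filter (fun i => (z i).2 = y) = I ∧ (z lst).2 = y)) := by
  classical
  have hjD : j ∈ Dcal := hI hj
  have hjl : j ≠ lst := fun h => hlstD (h ▸ hjD)
  have hswl : Equiv.swap j lst lst = j := Equiv.swap_apply_right j lst
  have hswj : Equiv.swap j lst j = lst := Equiv.swap_apply_left j lst
  constructor
  · rintro ⟨h1, h2⟩
    rw [hswl] at h2
    have hlz : (z lst).2 = y := by
      have := Finset.ext_iff.1 h1 j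
      have hji : j ∈ Dcal.filter (fun i => (z (Equiv.swap j lst i)).2 = y) := this.2 hj
      rw [Finset.mem_filter, hswj] at hji
      exact hji.2
    refine ⟨?_, hlz⟩
    ext i
    rw [Finset.mem_filter]
    by_cases hij : i = j
    · subst hij
      simp only [hjD, true_and]
      constructor
      · intro _; exact hj
      · intro _; exact h2
    · by_cases hil : i = lst
      · subst hil
        constructor
        · rintro ⟨h, _⟩; exact absurd h hlstD
        · intro h; exact absurd (hI h) hlstD
      · have hfix : Equiv.swap j lst i = i := Equiv.swap_apply_of_ne_of_ne hij hil
        have := Finset.ext_iff.1 h1 i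
        rw [Finset.mem_filter, hfix] at this
        exact this
  · rintro ⟨h1, h2⟩
    have hjz : (z j).2 = y := by
      have := Finset.ext_iff.1 h1 j
      have := this.2 hj
      exact (Finset.mem_filter.1 this).2
    refine ⟨?_, by rw [hswl]; exact hjz⟩
    ext i
    rw [Finset.mem_filter]
    by_cases hij : i = j
    · subst hij
      rw [hswj]
      simp only [hjD, true_and]
      exact ⟨fun _ => hj, fun _ => h2⟩
    · by_cases hil : i = lst
      · subst hil
        constructor
        · rintro ⟨h, _⟩; exact absurd h hlstD
        · intro h; exact absurd (hI h) hlstD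
      · have hfix : Equiv.swap j lst i = i := Equiv.swap_apply_of_ne_of_ne hij hil
        rw [hfix]
        have := Finset.ext_iff.1 h1 i
        rw [Finset.mem_filter] at this
        exact this

end AuxConformal

/-- Theorem 2, Algorithm 2, upper bound: conditionally on
`{I_y = I, Y_{2n+1} = y}` (with `|I| = m`, positive probability), if the scores
`{s(X_i, y) : i ∈ I} ∪ {s(X_{2n+1}, y)}` are a.s. pairwise distinct on this event, the
prediction set `C(X_{2n+1}) = {y : p(X_{2n+1}|y) > α}` satisfies
`P(Y_{2n+1} ∈ C(X_{2n+1}) | I_y = I, Y_{2n+1} = y) ≤ 1 − α + 1/(m+1)`. -/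
theorem conditional_prediction_set_coverage_upper_bound
    {Ω : Type*} [MeasurableSpace Ω] (P : Measure Ω) [IsProbabilityMeasure P]
    {𝒳 : Type*} [MeasurableSpace 𝒳]
    (n K : ℕ) (hn : 1 ≤ n) (hK : 1 ≤ K)
    (Z : Fin (2 * n + 1) → Ω → 𝒳 × Fin K)
    (hmeas : ∀ i, Measurable (Z i))
    (hexch : ∀ σ : Equiv.Perm (Fin (2 * n + 1)),
      Measure.map (fun ω i => Z (σ i) ω) P = Measure.map (fun ω i => Z i ω) P)
    (s : 𝒳 × Fin K → ℝ) (hs : Measurable s)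
    (Dcal : Finset (Fin (2 * n + 1)))
    (hDcal : Dcal = Finset.univ.filter
      (fun i : Fin (2 * n + 1) => n ≤ (i : ℕ) ∧ (i : ℕ) < 2 * n))
    (Iy : Fin K → Ω → Finset (Fin (2 * n + 1)))
    (hIy : ∀ y ω, Iy y ω = Dcal.filter (fun i => (Z i ω).2 = y))
    (p : Fin K → Ω → ℝ)
    (hp : ∀ y ω, p y ω =
      ((((Iy y ω).filter
          (fun i => s ((Z i ω).1, y) ≤ s ((Z (Fin.last (2 * n)) ω).1, y))).card : ℝ) + 1)
        / (((Iy y ω).card : ℝ) + 1))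
    (α : ℝ) (hα : α ∈ Set.Ioo (0 : ℝ) 1)
    (y : Fin K) (I : Finset (Fin (2 * n + 1))) (hI : I ⊆ Dcal)
    (m : ℕ) (hm : I.card = m)
    (hpos : 0 < P {ω | Iy y ω = I ∧ (Z (Fin.last (2 * n)) ω).2 = y})
    (hdist : ∀ᵐ ω ∂P, (Iy y ω = I ∧ (Z (Fin.last (2 * n)) ω).2 = y) →
      Set.InjOn (fun i => s ((Z i ω).1, y)) ↑(insert (Fin.last (2 * n)) I)) :
    P[|{ω | Iy y ω = I ∧ (Z (Fin.last (2 * n)) ω).2 = y}]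
        {ω | α < p ((Z (Fin.last (2 * n)) ω).2) ω}
      ≤ ENNReal.ofReal (1 - α + 1 / (m + 1)) := by
  classical
  obtain ⟨hα0, hα1⟩ := hα
  set lst : Fin (2 * n + 1) := Fin.last (2 * n) with hlst
  have hlstD : lst ∉ Dcal := by
    subst hDcal
    simp [hlst, Fin.val_last]
  have hlstI : lst ∉ I := fun h => hlstD (hI h)
  set J : Finset (Fin (2 * n + 1)) := insert lst I with hJdef
  have hJcard : J.card = m + 1 := by
    rw [hJdef, Finset.card_insert_of_notMem hlstI, hm]
  have hmem_lst_J : lst ∈ J := Finset.mem_insert_self _ _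
  have hmpos' : (0 : ℝ) < (m : ℝ) + 1 := by positivity
  have hαm0 : (0 : ℝ) ≤ α * ((m : ℝ) + 1) := by positivity
  set r0 : ℕ := Nat.floor (α * ((m : ℝ) + 1)) + 1 with hr0def
  have hr0le : r0 ≤ m + 1 := by
    have h1 : α * ((m : ℝ) + 1) < ((m + 1 : ℕ) : ℝ) := by push_cast; nlinarith
    have h2 := (Nat.floor_lt hαm0).2 h1
    omega
  set c : ℕ := m + 2 - r0 with hcdef
  set E : Set Ω := {ω | Iy y ω = I ∧ (Z lst ω).2 = y} with hEdef
  set Zv : Ω → (Fin (2 * n + 1) → 𝒳 × Fin K) := fun ω i => Z i ω with hZv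
  have hZvm : Measurable Zv := measurable_pi_lambda _ hmeas
  set T : Fin (2 * n + 1) → Set (Fin (2 * n + 1) → 𝒳 × Fin K) := fun j =>
    {z | (Dcal.filter (fun i => (z i).2 = y) = I ∧ (z lst).2 = y) ∧
      r0 ≤ aux_rk s y J j z} with hTdef
  -- measurability on sequence space
  have hmeas_label : ∀ i : Fin (2 * n + 1),
      Measurable (fun z : Fin (2 * n + 1) → 𝒳 × Fin K => (z i).2) :=
    fun i => (measurable_pi_apply i).snd
  have hmeas_score : ∀ i : Fin (2 * n + 1),
      Measurable (fun z : Fin (2 * n + 1) → 𝒳 × Fin K => s ((z i).1, y)) :=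
    fun i => hs.comp ((measurable_pi_apply i).fst.prodMk measurable_const)
  have hScond_meas : MeasurableSet {z : Fin (2 * n + 1) → 𝒳 × Fin K |
      Dcal.filter (fun i => (z i).2 = y) = I ∧ (z lst).2 = y} := by
    have h1 : {z : Fin (2 * n + 1) → 𝒳 × Fin K | Dcal.filter (fun i => (z i).2 = y) = I}
        = ⋂ i ∈ Dcal, {z | ((z i).2 = y) ↔ i ∈ I} := by
      ext z
      simp only [Set.mem_setOf_eq, Set.mem_iInter, Finset.ext_iff, Finset.mem_filter]
      constructor
      · intro h i hiD
        exact ⟨fun hz => (h i).1 ⟨hiD, hz⟩, fun hiI => ((h i).2 hiI).2⟩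
      · intro h i
        exact ⟨fun ⟨hiD, hz⟩ => (h i hiD).1 hz,
          fun hiI => ⟨hI hiI, (h i (hI hiI)).2 hiI⟩⟩
    have h2 : ∀ i : Fin (2 * n + 1),
        MeasurableSet {z : Fin (2 * n + 1) → 𝒳 × Fin K | ((z i).2 = y) ↔ i ∈ I} := by
      intro i
      by_cases hiI : i ∈ I
      · simp only [hiI, iff_true]
        exact (hmeas_label i) (measurableSet_singleton y)
      · simp only [hiI, iff_false]
        exact ((hmeas_label i) (measurableSet_singleton y)).compl
    have h3 : MeasurableSet {z : Fin (2 * n + 1) → 𝒳 × Fin K |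
        Dcal.filter (fun i => (z i).2 = y) = I} := by
      rw [h1]
      exact MeasurableSet.biInter (Set.to_countable _) (fun i _ => h2 i)
    exact h3.inter ((hmeas_label lst) (measurableSet_singleton y))
  have hrk_meas : ∀ j : Fin (2 * n + 1),
      Measurable (fun z : Fin (2 * n + 1) → 𝒳 × Fin K => aux_rk s y J j z) := by
    intro j
    have heq : (fun z : Fin (2 * n + 1) → 𝒳 × Fin K => aux_rk s y J j z)
        = fun z => ∑ i ∈ J, if s ((z i).1, y) ≤ s ((z j).1, y) then 1 else 0 := by
      funext z
      simp [aux_rk, Finset.sum_boole]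
    rw [heq]
    exact Finset.measurable_sum J (fun i _ =>
      Measurable.ite (measurableSet_le (hmeas_score i) (hmeas_score j))
        measurable_const measurable_const)
  have hT_meas : ∀ j, MeasurableSet (T j) := fun j =>
    hScond_meas.inter ((hrk_meas j) measurableSet_Ici)
  have hEset : E = Zv ⁻¹' {z : Fin (2 * n + 1) → 𝒳 × Fin K |
      Dcal.filter (fun i => (z i).2 = y) = I ∧ (z lst).2 = y} := by
    rw [hEdef]
    ext ω
    simp [hIy, hZv]
  have hEmeas : MeasurableSet E := by
    rw [hEset]; exact hZvm hScond_meas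
  -- exchangeability: swap invariance
  have hswap : ∀ j ∈ J, P (Zv ⁻¹' T j) = P (Zv ⁻¹' T lst) := by
    intro j hjJ
    rcases Finset.mem_insert.1 (hJdef ▸ hjJ) with hj | hj
    · rw [hj]
    · have hσJ : ∀ i, i ∈ J ↔ Equiv.swap j lst i ∈ J := by
        intro i
        by_cases hij : i = j
        · subst hij
          rw [Equiv.swap_apply_left]
          simp [hJdef, hj, hmem_lst_J]
        · by_cases hil : i = lst
          · subst hil
            rw [Equiv.swap_apply_right]
            simp [hJdef, hj, hmem_lst_J]
          · rw [Equiv.swap_apply_of_ne_of_ne hij hil]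
      have hmap := hexch (Equiv.swap j lst)
      have hmeasσ : Measurable (fun ω (i : Fin (2 * n + 1)) => Z (Equiv.swap j lst i) ω) :=
        measurable_pi_lambda _ (fun i => hmeas _)
      have h1 : P ((fun ω (i : Fin (2 * n + 1)) => Z (Equiv.swap j lst i) ω) ⁻¹' T lst)
          = P (Zv ⁻¹' T lst) := by
        rw [← Measure.map_apply hmeasσ (hT_meas lst),
          ← Measure.map_apply hZvm (hT_meas lst), hmap]
      have h2 : (fun ω (i : Fin (2 * n + 1)) => Z (Equiv.swap j lst i) ω) ⁻¹' T lst
          = Zv ⁻¹' T j := by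
        ext ω
        have hc := aux_cond_swap y Dcal I hI hlstD hj (Zv ω)
        rw [Equiv.swap_apply_right] at hc
        have hr := aux_rk_perm s y J (Zv ω) (Equiv.swap j lst) hσJ lst
        have hzr : (fun i => Z (Equiv.swap j lst i) ω) = fun i => (Zv ω) (Equiv.swap j lst i) := rfl
        simp only [Set.mem_preimage, hTdef, Set.mem_setOf_eq, hzr, hr,
          Equiv.swap_apply_right]
        exact and_congr hc Iff.rfl
      rw [← h2, h1]
  -- sum over J and integral bound
  have hsum_eq : ∑ j ∈ J, P (Zv ⁻¹' T j)
      = ∫⁻ ω, ∑ j ∈ J, (Zv ⁻¹' T j).indicator (fun _ => (1 : ℝ≥0∞)) ω ∂P := by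
    rw [lintegral_finset_sum _ (fun j _ => measurable_const.indicator (hZvm (hT_meas j)))]
    refine (Finset.sum_congr rfl (fun j hj => ?_)).symm
    rw [lintegral_indicator_const (hZvm (hT_meas j)), one_mul]
  have hbound : ∀ᵐ ω ∂P, ∑ j ∈ J, (Zv ⁻¹' T j).indicator (fun _ => (1 : ℝ≥0∞)) ω
      ≤ E.indicator (fun _ => (c : ℝ≥0∞)) ω := by
    filter_upwards [hdist] with ω hω
    by_cases hE : ω ∈ E
    · have hcond : Dcal.filter (fun i => ((Zv ω) i).2 = y) = I ∧ ((Zv ω) lst).2 = y := by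
        have hE' := hE
        rw [hEdef] at hE'
        exact ⟨by rw [← hIy]; exact hE'.1, hE'.2⟩
      have hinj : Set.InjOn (fun i => s (((Zv ω) i).1, y)) ↑J := by
        apply hω
        rw [hEdef] at hE
        exact hE
      have h1 : ∀ j, (Zv ⁻¹' T j).indicator (fun _ => (1 : ℝ≥0∞)) ω
          = if r0 ≤ aux_rk s y J j (Zv ω) then 1 else 0 := by
        intro j
        by_cases h : r0 ≤ aux_rk s y J j (Zv ω)
        · rw [if_pos h, Set.indicator_of_mem]
          exact ⟨hcond, h⟩
        · rw [if_neg h, Set.indicator_of_notMem]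
          intro hmem
          exact h hmem.2
      have h2 : ∑ j ∈ J, (Zv ⁻¹' T j).indicator (fun _ => (1 : ℝ≥0∞)) ω
          = ((J.filter fun j => r0 ≤ aux_rk s y J j (Zv ω)).card : ℝ≥0∞) := by
        simp only [h1]
        exact Finset.sum_boole _ _
      have h3 := aux_count_le s y J (Zv ω) r0 hinj
      rw [hJcard] at h3
      have h4 : (J.filter fun j => r0 ≤ aux_rk s y J j (Zv ω)).card ≤ c := by omega
      rw [h2, Set.indicator_of_mem hE]
      exact_mod_cast Nat.cast_le.2 h4
    · have h0 : ∀ j ∈ J, (Zv ⁻¹' T j).indicator (fun _ => (1 : ℝ≥0∞)) ω = 0 := by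
        intro j _
        apply Set.indicator_of_notMem
        intro hmem
        apply hE
        rw [hEdef]
        exact ⟨by rw [hIy]; exact hmem.1.1, hmem.1.2⟩
      rw [Finset.sum_eq_zero h0]
      exact zero_le
  have hkey : ((m + 1 : ℕ) : ℝ≥0∞) * P (Zv ⁻¹' T lst) ≤ (c : ℝ≥0∞) * P E := by
    have h1 : ∑ j ∈ J, P (Zv ⁻¹' T j) = ((m + 1 : ℕ) : ℝ≥0∞) * P (Zv ⁻¹' T lst) := by
      rw [Finset.sum_congr rfl hswap, Finset.sum_const, nsmul_eq_mul, hJcard]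
    have h2 : ∑ j ∈ J, P (Zv ⁻¹' T j) ≤ (c : ℝ≥0∞) * P E := by
      rw [hsum_eq]
      calc ∫⁻ ω, ∑ j ∈ J, (Zv ⁻¹' T j).indicator (fun _ => (1 : ℝ≥0∞)) ω ∂P
          ≤ ∫⁻ ω, E.indicator (fun _ => (c : ℝ≥0∞)) ω ∂P := lintegral_mono_ae hbound
        _ = (c : ℝ≥0∞) * P E := lintegral_indicator_const hEmeas _
    rw [← h1]; exact h2
  -- identify the target event
  have hcalc : ∀ ω : Ω, Iy y ω = I → (Z lst ω).2 = y →
      (α < p ((Z lst ω).2) ω ↔ r0 ≤ aux_rk s y J lst (Zv ω)) := by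
    intro ω hIyE hyE
    rw [hyE, hp y ω, hIyE, hm]
    have hrk : aux_rk s y J lst (Zv ω)
        = (I.filter (fun i => s ((Z i ω).1, y) ≤ s ((Z lst ω).1, y))).card + 1 := by
      have : aux_rk s y J lst (Zv ω)
          = (J.filter (fun i => s ((Z i ω).1, y) ≤ s ((Z lst ω).1, y))).card := rfl
      rw [this, hJdef, Finset.filter_insert, if_pos le_rfl,
        Finset.card_insert_of_notMem (fun hmem => hlstI (Finset.filter_subset _ _ hmem))]
    rw [hrk]
    set t := (I.filter (fun i => s ((Z i ω).1, y) ≤ s ((Z lst ω).1, y))).card with htdef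
    rw [lt_div_iff₀ hmpos']
    constructor
    · intro h
      have h2 : ⌊α * ((m : ℝ) + 1)⌋₊ < t + 1 :=
        (Nat.floor_lt hαm0).2 (by push_cast; linarith)
      omega
    · intro h
      have h3 : α * ((m : ℝ) + 1) < (r0 : ℝ) := by
        have h4 := Nat.lt_floor_add_one (α * ((m : ℝ) + 1))
        have h5 : (r0 : ℝ) = (⌊α * ((m : ℝ) + 1)⌋₊ : ℝ) + 1 := by
          rw [hr0def]; push_cast; ring
        linarith
      have h5 : (r0 : ℝ) ≤ (t : ℝ) + 1 := by exact_mod_cast h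
      linarith
  have hET : E ∩ {ω | α < p ((Z lst ω).2) ω} = Zv ⁻¹' T lst := by
    ext ω
    simp only [Set.mem_inter_iff, Set.mem_setOf_eq, Set.mem_preimage, hTdef, hEdef]
    constructor
    · rintro ⟨⟨hIyE, hyE⟩, htar⟩
      refine ⟨⟨by rw [← hIy]; exact hIyE, hyE⟩, (hcalc ω hIyE hyE).1 htar⟩
    · rintro ⟨⟨hcond, hyE⟩, hrk⟩
      have hIyE : Iy y ω = I := by rw [hIy]; exact hcond
      exact ⟨⟨hIyE, hyE⟩, (hcalc ω hIyE hyE).2 hrk⟩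
  -- conclude
  have hPE0 : P E ≠ 0 := hpos.ne'
  have hPEt : P E ≠ ⊤ := measure_ne_top P E
  have hMne0 : ((m + 1 : ℕ) : ℝ≥0∞) ≠ 0 := by positivity
  have hMnet : ((m + 1 : ℕ) : ℝ≥0∞) ≠ ⊤ := ENNReal.natCast_ne_top _
  rw [cond_apply hEmeas, hET]
  have h6 : P (Zv ⁻¹' T lst) ≤ (c : ℝ≥0∞) * P E / ((m + 1 : ℕ) : ℝ≥0∞) :=
    (ENNReal.le_div_iff_mul_le (Or.inl hMne0) (Or.inl hMnet)).2
      (by rw [mul_comm]; exact hkey)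
  calc (P E)⁻¹ * P (Zv ⁻¹' T lst)
      ≤ (P E)⁻¹ * ((c : ℝ≥0∞) * P E / ((m + 1 : ℕ) : ℝ≥0∞)) := mul_le_mul_right h6 _
    _ = (c : ℝ≥0∞) / ((m + 1 : ℕ) : ℝ≥0∞) := by
        rw [div_eq_mul_inv, div_eq_mul_inv, mul_right_comm ((c : ℝ≥0∞)) (P E),
          mul_comm ((P E)⁻¹) _, mul_assoc, ENNReal.mul_inv_cancel hPE0 hPEt, mul_one]
    _ ≤ ENNReal.ofReal (1 - α + 1 / ((m : ℝ) + 1)) := by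
        have hle : ((c : ℕ) : ℝ) / ((m : ℝ) + 1) ≤ 1 - α + 1 / ((m : ℝ) + 1) := by
          rw [div_le_iff₀ hmpos']
          have hc : ((c : ℕ) : ℝ) = (m : ℝ) + 2 - (r0 : ℝ) := by
            rw [hcdef]
            push_cast [Nat.cast_sub (by omega : r0 ≤ m + 2)]
            ring
          have h3 : α * ((m : ℝ) + 1) < (r0 : ℝ) := by
            have h4 := Nat.lt_floor_add_one (α * ((m : ℝ) + 1))
            have h5 : (r0 : ℝ) = (⌊α * ((m : ℝ) + 1)⌋₊ : ℝ) + 1 := by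
              rw [hr0def]; push_cast; ring
            linarith
          have hexp : (1 - α + 1 / ((m : ℝ) + 1)) * ((m : ℝ) + 1)
              = ((m : ℝ) + 1) - α * ((m : ℝ) + 1) + 1 := by
            field_simp
          rw [hexp]
          linarith
        have heq : ((c : ℕ) : ℝ≥0∞) / ((m + 1 : ℕ) : ℝ≥0∞)
            = ENNReal.ofReal (((c : ℕ) : ℝ) / ((m : ℝ) + 1)) := by
          rw [show ((m : ℝ) + 1) = ((m + 1 : ℕ) : ℝ) by push_cast; ring,
            ENNReal.ofReal_div_of_pos (by exact_mod_cast hmpos'),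
            ENNReal.ofReal_natCast, ENNReal.ofReal_natCast]
        rw [heq]
        exact ENNReal.ofReal_le_ofReal hle
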